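/- Let 0 → T₁ → M₁ → N₁ → 0 and 0 → T₂ → M₂ → N₂ → 0 be exact sequences of O-modules with compatible vertical maps h' : T₁ → T₂, φ : M₁ → M₂, h'' : N₁ → N₂, where T₁, T₂ are annihilated by a power of π, N₁ and N₂ are finitely generated O-modules, and ker φ and coker φ are finitely generated over O. Then ker h'' and coker h'' are finitely generated over O and rank_O(ker φ) − rank_O(coker φ) = rank_O(ker h'') − rank_O(coker h'') = rank_O(N₁) − rank_O(N₂). -/

import Mathlib

/-- Let `O` be a complete discrete valuation ring with uniformizer `π` and finite residue
field.  Let `0 → T₁ → M₁ → N₁ → 0` and `0 → T₂ → M₂ → N₂ → 0` be exact sequences of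
`O`-modules with compatible vertical maps `h' : T₁ → T₂`, `φ : M₁ → M₂`, `h'' : N₁ → N₂`,
where `T₁, T₂` are annihilated by powers of `π`, `N₁` and `N₂` are finitely generated
`O`-modules, and `ker φ`, `coker φ` are finitely generated over `O`.  Then `ker h''` and
`coker h''` are finitely generated over `O` and
`rank_O(ker φ) − rank_O(coker φ) = rank_O(ker h'') − rank_O(coker h'')
  = rank_O(N₁) − rank_O(N₂)`. -/
theorem descent_rank_comparison
    (O : Type) [CommRing O] [IsDomain O] [IsDiscreteValuationRing O]
    [Finite (IsLocalRing.ResidueField O)]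
    (π : O) (hπ : Irreducible π)
    (T₁ M₁ N₁ T₂ M₂ N₂ : Type)
    [AddCommGroup T₁] [Module O T₁] [AddCommGroup M₁] [Module O M₁]
    [AddCommGroup N₁] [Module O N₁] [AddCommGroup T₂] [Module O T₂]
    [AddCommGroup M₂] [Module O M₂] [AddCommGroup N₂] [Module O N₂]
    (t₁ : T₁ →ₗ[O] M₁) (p₁ : M₁ →ₗ[O] N₁)
    (t₂ : T₂ →ₗ[O] M₂) (p₂ : M₂ →ₗ[O] N₂)
    (h' : T₁ →ₗ[O] T₂) (φ : M₁ →ₗ[O] M₂) (h'' : N₁ →ₗ[O] N₂)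
    (ht₁ : Function.Injective t₁) (hp₁ : Function.Surjective p₁)
    (hex₁ : Function.Exact t₁ p₁)
    (ht₂ : Function.Injective t₂) (hp₂ : Function.Surjective p₂)
    (hex₂ : Function.Exact t₂ p₂)
    (hsq₁ : φ.comp t₁ = t₂.comp h') (hsq₂ : h''.comp p₁ = p₂.comp φ)
    (r s : ℕ) (hT₁ : ∀ x : T₁, π ^ r • x = 0) (hT₂ : ∀ x : T₂, π ^ s • x = 0)
    [Module.Finite O N₁] [Module.Finite O N₂]
    (hkφ : Module.Finite O (LinearMap.ker φ))
    (hcφ : Module.Finite O (M₂ ⧸ LinearMap.range φ)) :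
    Module.Finite O (LinearMap.ker h'') ∧
    Module.Finite O (N₂ ⧸ LinearMap.range h'') ∧
    (Module.finrank O (LinearMap.ker φ) : ℤ)
        - Module.finrank O (M₂ ⧸ LinearMap.range φ)
      = (Module.finrank O (LinearMap.ker h'') : ℤ)
        - Module.finrank O (N₂ ⧸ LinearMap.range h'') ∧
    (Module.finrank O (LinearMap.ker h'') : ℤ)
        - Module.finrank O (N₂ ⧸ LinearMap.range h'')
      = (Module.finrank O N₁ : ℤ) - Module.finrank O N₂ := by

  classical
  -- `O` is Noetherian, so submodules/quotients of finitely generated modules are f.g.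
  have hker : Module.Finite O (LinearMap.ker h'') := by
    have : IsNoetherian O N₁ := inferInstance
    exact Module.Finite.iff_fg.mpr (IsNoetherian.noetherian _)
  have hcok : Module.Finite O (N₂ ⧸ LinearMap.range h'') := Module.Finite.quotient O _
  -- torsion kernels have rank zero
  have hπr : (π ^ r : O) ≠ 0 := pow_ne_zero _ hπ.ne_zero
  have hπs : (π ^ s : O) ≠ 0 := pow_ne_zero _ hπ.ne_zero
  have hK1 : Module.rank O (LinearMap.ker p₁) = 0 := by
    rw [rank_eq_zero_iff]
    rintro ⟨x, hx⟩
    obtain ⟨y, rfl⟩ := (hex₁ x).mp hx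
    refine ⟨π ^ r, hπr, ?_⟩
    ext
    show π ^ r • t₁ y = 0
    rw [← map_smul, hT₁ y, map_zero]
  have hK2 : Module.rank O (LinearMap.ker p₂) = 0 := by
    rw [rank_eq_zero_iff]
    rintro ⟨x, hx⟩
    obtain ⟨y, rfl⟩ := (hex₂ x).mp hx
    refine ⟨π ^ s, hπs, ?_⟩
    ext
    show π ^ s • t₂ y = 0
    rw [← map_smul, hT₂ y, map_zero]
  -- hence `rank M₁ = rank N₁` and `rank M₂ = rank N₂`
  have e₁ : Module.rank O M₁ = Module.rank O N₁ := by
    have h := LinearMap.rank_range_add_rank_ker p₁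
    rw [hK1, add_zero, LinearMap.range_eq_top.mpr hp₁, rank_top] at h
    exact h.symm
  have e₂ : Module.rank O M₂ = Module.rank O N₂ := by
    have h := LinearMap.rank_range_add_rank_ker p₂
    rw [hK2, add_zero, LinearMap.range_eq_top.mpr hp₂, rank_top] at h
    exact h.symm
  -- rank–nullity over the domain `O`
  have fN₁ : Module.rank O N₁ < Cardinal.aleph0 := Module.rank_lt_aleph0 O N₁
  have fN₂ : Module.rank O N₂ < Cardinal.aleph0 := Module.rank_lt_aleph0 O N₂
  have h1 : Module.rank O (LinearMap.range φ) + Module.rank O (LinearMap.ker φ)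
      = Module.rank O N₁ := by rw [LinearMap.rank_range_add_rank_ker, e₁]
  have h2 : Module.rank O (M₂ ⧸ LinearMap.range φ) + Module.rank O (LinearMap.range φ)
      = Module.rank O N₂ := by rw [Submodule.rank_quotient_add_rank, e₂]
  have h3 : Module.rank O (LinearMap.range h'') + Module.rank O (LinearMap.ker h'')
      = Module.rank O N₁ := LinearMap.rank_range_add_rank_ker h''
  have h4 : Module.rank O (N₂ ⧸ LinearMap.range h'') + Module.rank O (LinearMap.range h'')
      = Module.rank O N₂ := Submodule.rank_quotient_add_rank _
  -- all the cardinals involved are finite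
  have fin_of_add : ∀ {x y z : Cardinal}, x + y = z → z < Cardinal.aleph0 →
      x < Cardinal.aleph0 ∧ y < Cardinal.aleph0 := by
    intro x y z h hz
    subst h
    exact ⟨(le_self_add).trans_lt hz, (le_add_self).trans_lt hz⟩
  obtain ⟨f1a, f1b⟩ := fin_of_add h1 fN₁
  obtain ⟨f2a, f2b⟩ := fin_of_add h2 fN₂
  obtain ⟨f3a, f3b⟩ := fin_of_add h3 fN₁
  obtain ⟨f4a, f4b⟩ := fin_of_add h4 fN₂
  -- pass to natural numbers (`finrank` is `toNat` of `rank`)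
  have toNat_eq : ∀ {x y z : Cardinal}, x + y = z → x < Cardinal.aleph0 →
      y < Cardinal.aleph0 → x.toNat + y.toNat = z.toNat := by
    intro x y z h hx hy
    rw [← Cardinal.toNat_add hx hy, h]
  have n1 := toNat_eq h1 f1a f1b
  have n2 := toNat_eq h2 f2a f2b
  have n3 := toNat_eq h3 f3a f3b
  have n4 := toNat_eq h4 f4a f4b
  have frk : ∀ (X : Type) [AddCommGroup X] [Module O X],
      (Module.rank O X).toNat = Module.finrank O X := fun _ _ _ => rfl
  rw [frk, frk, frk] at n1 n2 n3 n4
  refine ⟨hker, hcok, ?_, ?_⟩ <;> omega
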